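/- Let (t_n)_{n≥1} be a sequence of nonnegative real numbers with ∑_{n=1}^∞ t_n = 1. Then the infinite product ∏_{n=1}^∞ (1+t_n) converges and satisfies 2 ≤ ∏_{n=1}^∞ (1+t_n) ≤ e. Moreover, ∏_{n=1}^∞ (1+t_n) = 2 if and only if there is exactly one index m with t_m = 1 and t_n = 0 for all n ≠ m. -/

import Mathlib

open Finset Filter Real

lemma weier (t : ℕ → ℝ) (ht : ∀ n, 0 ≤ t n) (s : Finset ℕ) :
    1 + ∑ n ∈ s, t n ≤ ∏ n ∈ s, (1 + t n) := by
  classical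
  induction s using Finset.induction with
  | empty => simp
  | @insert a s' hx ih =>
    rw [Finset.sum_insert hx, Finset.prod_insert hx]
    have h1 : 0 ≤ ∑ n ∈ s', t n := Finset.sum_nonneg fun n _ => ht n
    nlinarith [ht a, ih]

/-- If (t_n) is nonnegative with ∑ t_n = 1, then ∏ (1+t_n) converges,
2 ≤ ∏ (1+t_n) ≤ e, and ∏ (1+t_n) = 2 iff exactly one t_m = 1 and all other t_n = 0. -/
theorem stmt_17 (t : ℕ → ℝ) (ht : ∀ n, 0 ≤ t n) (hsum : HasSum t 1) :
    Multipliable (fun n => 1 + t n) ∧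
      2 ≤ (∏' n, (1 + t n)) ∧ (∏' n, (1 + t n)) ≤ Real.exp 1 ∧
      ((∏' n, (1 + t n)) = 2 ↔ ∃ m, t m = 1 ∧ ∀ n ≠ m, t n = 0) := by
  classical
  have hpos : ∀ n, (0:ℝ) < 1 + t n := fun n => by linarith [ht n]
  have hlog_nonneg : ∀ n, 0 ≤ Real.log (1 + t n) := fun n =>
    Real.log_nonneg (by linarith [ht n])
  have hlog_le : ∀ n, Real.log (1 + t n) ≤ t n := fun n => by
    have := Real.log_le_sub_one_of_pos (hpos n)
    linarith
  have hslog : Summable (fun n => Real.log (1 + t n)) :=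
    Summable.of_nonneg_of_le hlog_nonneg hlog_le hsum.summable
  have hP : HasProd (fun n => 1 + t n) (∏' n, (1 + t n)) :=
    (Real.multipliable_of_summable_log hpos hslog).hasProd
  have hmul : Multipliable (fun n => 1 + t n) := ⟨_, hP⟩
  have hexp : Real.exp (∑' n, Real.log (1 + t n)) = ∏' n, (1 + t n) := by
    have := Real.rexp_tsum_eq_tprod hpos hslog
    simpa using this
  have hlow : 2 ≤ ∏' n, (1 + t n) := by
    have h1 : Tendsto (fun s : Finset ℕ => 1 + ∑ n ∈ s, t n) atTop (nhds (1 + 1)) :=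
      hsum.const_add 1
    have := le_of_tendsto_of_tendsto' h1 hP (fun s => weier t ht s)
    linarith
  have hup : (∏' n, (1 + t n)) ≤ Real.exp 1 := by
    rw [← hexp]
    apply Real.exp_le_exp.mpr
    calc (∑' n, Real.log (1 + t n)) ≤ ∑' n, t n :=
          Summable.tsum_le_tsum hlog_le hslog hsum.summable
      _ = 1 := hsum.tsum_eq
  refine ⟨hmul, hlow, hup, ?_, ?_⟩
  · intro h2
    have key : ∀ a b, a ≠ b → t a = 0 ∨ t b = 0 := by
      intro a b hab
      by_contra hcon
      push_neg at hcon
      have hta : 0 < t a := lt_of_le_of_ne (ht a) (Ne.symm hcon.1)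
      have htb : 0 < t b := lt_of_le_of_ne (ht b) (Ne.symm hcon.2)
      have hfin : ∀ s : Finset ℕ, a ∈ s → b ∈ s →
          1 + (∑ n ∈ s, t n) + t a * t b ≤ ∏ n ∈ s, (1 + t n) := by
        intro s has hbs
        have hbe : b ∈ s.erase a := Finset.mem_erase.mpr ⟨fun h => hab h.symm, hbs⟩
        rw [← Finset.prod_erase_mul s _ has, ← Finset.prod_erase_mul _ _ hbe,
          ← Finset.sum_erase_add s _ has, ← Finset.sum_erase_add _ _ hbe]
        have hW := weier t ht ((s.erase a).erase b)
        have hR : 0 ≤ ∑ n ∈ (s.erase a).erase b, t n :=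
          Finset.sum_nonneg fun n _ => ht n
        have hq : (1 + ∑ n ∈ (s.erase a).erase b, t n) * (1 + t b) * (1 + t a) ≤
            (∏ n ∈ (s.erase a).erase b, (1 + t n)) * (1 + t b) * (1 + t a) := by
          have := hpos a
          have := hpos b
          gcongr
        nlinarith [mul_nonneg hR htb.le, mul_nonneg hR hta.le,
          mul_nonneg (mul_nonneg hR htb.le) hta.le, mul_nonneg htb.le hta.le]
      have h1 : Tendsto (fun s : Finset ℕ => 1 + (∑ n ∈ s, t n) + t a * t b) atTop
          (nhds (1 + 1 + t a * t b)) := (hsum.const_add 1).add_const _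
      have hev : ∀ᶠ s : Finset ℕ in atTop,
          1 + (∑ n ∈ s, t n) + t a * t b ≤ ∏ n ∈ s, (1 + t n) := by
        filter_upwards [Filter.eventually_ge_atTop ({a, b} : Finset ℕ)] with s hs
        exact hfin s (hs (by simp)) (hs (by simp))
      have := le_of_tendsto_of_tendsto h1 hP hev
      rw [h2] at this
      nlinarith
    obtain ⟨m, hm⟩ : ∃ m, t m ≠ 0 := by
      by_contra hc
      push_neg at hc
      have : HasSum t 0 := by
        convert hasSum_zero with n
        exact hc n
      have := hsum.unique this
      norm_num at this
    have hz : ∀ n ≠ m, t n = 0 := by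
      intro n hn
      rcases key n m hn with h | h
      · exact h
      · exact absurd h hm
    refine ⟨m, ?_, hz⟩
    have : (∑' n, t n) = t m := tsum_eq_single m hz
    rw [hsum.tsum_eq] at this
    exact this.symm
  · rintro ⟨m, hm1, hz⟩
    have : ∏' n, (1 + t n) = 1 + t m :=
      tprod_eq_mulSingle m (fun n hn => by rw [hz n hn, add_zero])
    rw [this, hm1]
    norm_num
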